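/- arXiv:1210.8234 — 2 statements merged into one kernel-verified Lean document; each statement's English description precedes it below -/
import Mathlib

section
/- For p in the open unit ball of ℝ^d and q in the open unit ball with p ≠ q, the argument (1 - ⟨p,q⟩)/√((1-‖p‖²)(1-‖q‖²)) of arccosh in the Klein distance is always ≥ 1, with equality if and only if p = q. -/
open Real
open scoped RealInnerProductSpace BigOperators

/-- The argument of `arccosh` in the Klein distance is always `≥ 1`,
with equality iff the two points coincide. -/
theorem klein_arg_ge_one {d : ℕ} (p q : EuclideanSpace ℝ (Fin d))
    (hp : ‖p‖ < 1) (hq : ‖q‖ < 1) :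
    1 ≤ (1 - ⟪p, q⟫) / Real.sqrt ((1 - ‖p‖ ^ 2) * (1 - ‖q‖ ^ 2)) ∧
      ((1 - ⟪p, q⟫) / Real.sqrt ((1 - ‖p‖ ^ 2) * (1 - ‖q‖ ^ 2)) = 1 ↔ p = q) := by
  set a := ‖p‖ with ha
  set b := ‖q‖ with hb
  set t := ⟪p, q⟫ with htdef
  have ha0 : 0 ≤ a := norm_nonneg p
  have hb0 : 0 ≤ b := norm_nonneg q
  have hcs : t ≤ a * b := real_inner_le_norm p q
  have hcs' : -(a * b) ≤ t := by
    have := abs_real_inner_le_norm p q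
    rw [abs_le] at this
    exact this.1
  have hab : a * b < 1 := by nlinarith
  have ht1 : t < 1 := lt_of_le_of_lt hcs hab
  have hnsub : ‖p - q‖ ^ 2 = a ^ 2 - 2 * t + b ^ 2 := by
    rw [ha, hb, htdef]; exact norm_sub_sq_real p q
  have hns : 0 ≤ a ^ 2 - 2 * t + b ^ 2 := by
    rw [← hnsub]; positivity
  have h1ab : 0 ≤ a * b - t := by linarith
  have h2ab : 0 ≤ 2 - a * b - t := by linarith
  have hA : 0 < (1 - a ^ 2) * (1 - b ^ 2) :=
    mul_pos (by nlinarith) (by nlinarith)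
  have hD : (1 - a ^ 2) * (1 - b ^ 2) ≤ (1 - t) ^ 2 := by
    nlinarith [sq_nonneg (a - b), mul_nonneg h1ab h2ab]
  have hSpos : 0 < Real.sqrt ((1 - a ^ 2) * (1 - b ^ 2)) := Real.sqrt_pos.mpr hA
  have hSle : Real.sqrt ((1 - a ^ 2) * (1 - b ^ 2)) ≤ 1 - t := by
    calc Real.sqrt ((1 - a ^ 2) * (1 - b ^ 2)) ≤ Real.sqrt ((1 - t) ^ 2) :=
          Real.sqrt_le_sqrt hD
      _ = 1 - t := by rw [Real.sqrt_sq (by linarith)]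
  constructor
  · rw [le_div_iff₀ hSpos]; linarith
  · constructor
    · intro h
      by_contra hne
      have hpq0 : 0 < ‖p - q‖ := norm_pos_iff.mpr (sub_ne_zero_of_ne hne)
      have hpq : 0 < a ^ 2 - 2 * t + b ^ 2 := by
        rw [← hnsub]; positivity
      have hDs : (1 - a ^ 2) * (1 - b ^ 2) < (1 - t) ^ 2 := by
        rcases eq_or_lt_of_le hcs with hcase | hcase
        · nlinarith [sq_nonneg (a - b)]
        · have h1 : 0 < a * b - t := by linarith
          have h2 : 0 < 2 - a * b - t := by nlinarith
          nlinarith [sq_nonneg (a - b), mul_pos h1 h2]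
      have hSlt : Real.sqrt ((1 - a ^ 2) * (1 - b ^ 2)) < 1 - t := by
        calc Real.sqrt ((1 - a ^ 2) * (1 - b ^ 2)) < Real.sqrt ((1 - t) ^ 2) :=
              Real.sqrt_lt_sqrt hA.le hDs
          _ = 1 - t := by rw [Real.sqrt_sq (by linarith)]
      rw [div_eq_one_iff_eq hSpos.ne'] at h
      linarith
    · intro h
      subst h
      have hba : b = a := by rw [ha, hb]
      have htt : t = a ^ 2 := by
        rw [htdef, ha]; exact real_inner_self_eq_norm_sq p
      rw [div_eq_one_iff_eq hSpos.ne', htt, hba, ← sq]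
      exact (Real.sqrt_sq (by nlinarith)).symm
end

section
/- Define for p in the open unit ball the ball center c(p) = p/(2√(1-‖p‖²)) and weight w(p) = ‖p‖²/(4(1-‖p‖²)) - 1/√(1-‖p‖²). Then for any two distinct points p, q in the open unit ball and any x ∈ ℝ^d, the power distances satisfy ‖c(p)-x‖² - w(p) = ‖c(q)-x‖² - w(q) if and only if ⟨x, q√(1-‖p‖²) - p√(1-‖q‖²)⟩ + √(1-‖q‖²) - √(1-‖p‖²) = 0, after multiplying by the positive factor; hence the Klein hyperbolic bisector of p,q coincides with the radical hyperplane of the associated weighted points. -/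
open Real
open scoped RealInnerProductSpace BigOperators

noncomputable def arcosh (x : ℝ) : ℝ := Real.log (x + Real.sqrt (x ^ 2 - 1))

/-- Klein hyperbolic distance on the open unit ball. -/
noncomputable def kleinDist {d : ℕ} (p q : EuclideanSpace ℝ (Fin d)) : ℝ :=
  _root_.arcosh ((1 - ⟪p, q⟫) / Real.sqrt ((1 - ‖p‖ ^ 2) * (1 - ‖q‖ ^ 2)))

/-- Center of the ball associated to a Klein point. -/
noncomputable def kleinCenter {d : ℕ} (p : EuclideanSpace ℝ (Fin d)) :
    EuclideanSpace ℝ (Fin d) :=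
  (2 * Real.sqrt (1 - ‖p‖ ^ 2))⁻¹ • p

/-- Weight of the ball associated to a Klein point. -/
noncomputable def kleinWeight {d : ℕ} (p : EuclideanSpace ℝ (Fin d)) : ℝ :=
  ‖p‖ ^ 2 / (4 * (1 - ‖p‖ ^ 2)) - 1 / Real.sqrt (1 - ‖p‖ ^ 2)

lemma arcosh_strictMonoOn : StrictMonoOn _root_.arcosh (Set.Ici 1) := by
  intro x hx y hy hxy
  simp only [Set.mem_Ici] at hx hy
  unfold _root_.arcosh
  have hs := Real.sqrt_nonneg (x ^ 2 - 1)
  apply Real.log_lt_log (by linarith)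
  have h1 : Real.sqrt (x ^ 2 - 1) ≤ Real.sqrt (y ^ 2 - 1) := by
    apply Real.sqrt_le_sqrt; nlinarith
  linarith

lemma power_eq {d : ℕ} (p : EuclideanSpace ℝ (Fin d)) (hp : ‖p‖ < 1)
    (x : EuclideanSpace ℝ (Fin d)) :
    ‖kleinCenter p - x‖ ^ 2 - kleinWeight p
      = ‖x‖ ^ 2 + (1 - ⟪p, x⟫) / Real.sqrt (1 - ‖p‖ ^ 2) := by
  have hA : (0:ℝ) < 1 - ‖p‖ ^ 2 := by nlinarith [norm_nonneg p]
  set a := Real.sqrt (1 - ‖p‖ ^ 2) with hadef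
  have ha : 0 < a := Real.sqrt_pos.mpr hA
  have ha2 : a ^ 2 = 1 - ‖p‖ ^ 2 := Real.sq_sqrt hA.le
  unfold kleinCenter kleinWeight
  rw [@norm_sub_sq_real, norm_smul, real_inner_smul_left, ← hadef, ← ha2]
  rw [norm_inv, Real.norm_eq_abs, abs_of_pos (by linarith)]
  field_simp
  ring

lemma one_le_arg {d : ℕ} (p x : EuclideanSpace ℝ (Fin d)) (hp : ‖p‖ < 1) (hx : ‖x‖ < 1) :
    1 ≤ (1 - ⟪p, x⟫) / Real.sqrt ((1 - ‖p‖ ^ 2) * (1 - ‖x‖ ^ 2)) := by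
  have hA : (0:ℝ) < 1 - ‖p‖ ^ 2 := by nlinarith [norm_nonneg p]
  have hB : (0:ℝ) < 1 - ‖x‖ ^ 2 := by nlinarith [norm_nonneg x]
  have ht : |⟪p, x⟫| ≤ ‖p‖ * ‖x‖ := abs_real_inner_le_norm p x
  rw [abs_le] at ht
  have hnp := norm_nonneg p
  have hnx := norm_nonneg x
  have h1 : ⟪p, x⟫ < 1 := by nlinarith
  rw [le_div_iff₀ (Real.sqrt_pos.mpr (by positivity))]
  have hsq : Real.sqrt ((1 - ‖p‖ ^ 2) * (1 - ‖x‖ ^ 2)) ≤ 1 - ⟪p, x⟫ := by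
    rw [show (1:ℝ) - ⟪p, x⟫ = Real.sqrt ((1 - ⟪p, x⟫) ^ 2) from
      (Real.sqrt_sq (by linarith)).symm]
    apply Real.sqrt_le_sqrt
    nlinarith [sq_nonneg (‖p‖ - ‖x‖), mul_nonneg (sub_nonneg.mpr ht.2) (by nlinarith : (0:ℝ) ≤ 2 - ⟪p, x⟫ - ‖p‖ * ‖x‖)]
  linarith

/-- The Klein hyperbolic bisector coincides with the radical hyperplane of the
associated weighted points. -/
theorem klein_bisector_eq_radical_hyperplane {d : ℕ}
    (p q : EuclideanSpace ℝ (Fin d)) (hp : ‖p‖ < 1) (hq : ‖q‖ < 1) (hpq : p ≠ q) :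
    (∀ x : EuclideanSpace ℝ (Fin d),
      (‖kleinCenter p - x‖ ^ 2 - kleinWeight p = ‖kleinCenter q - x‖ ^ 2 - kleinWeight q ↔
        ⟪x, Real.sqrt (1 - ‖p‖ ^ 2) • q - Real.sqrt (1 - ‖q‖ ^ 2) • p⟫ +
          Real.sqrt (1 - ‖q‖ ^ 2) - Real.sqrt (1 - ‖p‖ ^ 2) = 0)) ∧
    {x : EuclideanSpace ℝ (Fin d) | ‖x‖ < 1 ∧ kleinDist p x = kleinDist q x} =
      {x : EuclideanSpace ℝ (Fin d) | ‖x‖ < 1 ∧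
        2 * ⟪x, kleinCenter q - kleinCenter p⟫ + ‖kleinCenter p‖ ^ 2 - ‖kleinCenter q‖ ^ 2 +
          kleinWeight q - kleinWeight p = 0} := by
  have hA : (0:ℝ) < 1 - ‖p‖ ^ 2 := by nlinarith [norm_nonneg p]
  have hB : (0:ℝ) < 1 - ‖q‖ ^ 2 := by nlinarith [norm_nonneg q]
  set a := Real.sqrt (1 - ‖p‖ ^ 2) with hadef
  set b := Real.sqrt (1 - ‖q‖ ^ 2) with hbdef
  have ha : 0 < a := Real.sqrt_pos.mpr hA
  have hb : 0 < b := Real.sqrt_pos.mpr hB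
  -- the central equivalence
  have key : ∀ x : EuclideanSpace ℝ (Fin d),
      ((1 - ⟪p, x⟫) / a = (1 - ⟪q, x⟫) / b) ↔
      (⟪x, a • q - b • p⟫ + b - a = 0) := by
    intro x
    rw [inner_sub_right, real_inner_smul_right, real_inner_smul_right,
      real_inner_comm x p, real_inner_comm x q,
      div_eq_div_iff ha.ne' hb.ne']
    constructor <;> intro h <;> nlinarith [h]
  have hpow : ∀ x : EuclideanSpace ℝ (Fin d),
      (‖kleinCenter p - x‖ ^ 2 - kleinWeight p = ‖kleinCenter q - x‖ ^ 2 - kleinWeight q) ↔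
      ((1 - ⟪p, x⟫) / a = (1 - ⟪q, x⟫) / b) := by
    intro x
    rw [power_eq p hp x, power_eq q hq x, ← hadef, ← hbdef]
    constructor <;> intro h <;> linarith
  refine ⟨fun x => (hpow x).trans (key x), ?_⟩
  ext x
  simp only [Set.mem_setOf_eq]
  constructor
  · rintro ⟨hx, hdist⟩
    refine ⟨hx, ?_⟩
    -- from kleinDist equality deduce the linear condition
    have hS : (0:ℝ) < 1 - ‖x‖ ^ 2 := by nlinarith [norm_nonneg x]
    set s := Real.sqrt (1 - ‖x‖ ^ 2) with hsdef
    have hs : 0 < s := Real.sqrt_pos.mpr hS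
    have h1 := one_le_arg p x hp hx
    have h2 := one_le_arg q x hq hx
    have hargeq : (1 - ⟪p, x⟫) / Real.sqrt ((1 - ‖p‖ ^ 2) * (1 - ‖x‖ ^ 2))
        = (1 - ⟪q, x⟫) / Real.sqrt ((1 - ‖q‖ ^ 2) * (1 - ‖x‖ ^ 2)) :=
      arcosh_strictMonoOn.injOn h1 h2 hdist
    have hsp : Real.sqrt ((1 - ‖p‖ ^ 2) * (1 - ‖x‖ ^ 2)) = a * s := by
      rw [Real.sqrt_mul hA.le]
    have hsq2 : Real.sqrt ((1 - ‖q‖ ^ 2) * (1 - ‖x‖ ^ 2)) = b * s := by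
      rw [Real.sqrt_mul hB.le]
    rw [hsp, hsq2] at hargeq
    have hC : (1 - ⟪p, x⟫) / a = (1 - ⟪q, x⟫) / b := by
      field_simp at hargeq ⊢
      nlinarith [hargeq]
    have := (hpow x).mpr hC
    -- convert power equality to the radical hyperplane form
    have e1 := power_eq p hp x
    have e2 := power_eq q hq x
    have e1' := power_eq p hp (0 : EuclideanSpace ℝ (Fin d))
    have e2' := power_eq q hq (0 : EuclideanSpace ℝ (Fin d))
    simp only [sub_zero, inner_zero_right, norm_zero] at e1' e2'
    have hC' : (1 - ⟪p, x⟫) * b = (1 - ⟪q, x⟫) * a := (div_eq_div_iff ha.ne' hb.ne').mp hC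
    have hcp : ⟪x, p⟫ = ⟪p, x⟫ := real_inner_comm p x
    have hcq : ⟪x, q⟫ = ⟪q, x⟫ := real_inner_comm q x
    rw [inner_sub_right]
    unfold kleinCenter at *
    rw [real_inner_smul_right, real_inner_smul_right, ← hadef, ← hbdef, hcp, hcq]
    rw [← hadef] at e1'
    rw [← hbdef] at e2'
    have w1 : kleinWeight p = ‖(2 * a)⁻¹ • p‖ ^ 2 - 1 / a := by linarith
    have w2 : kleinWeight q = ‖(2 * b)⁻¹ • q‖ ^ 2 - 1 / b := by linarith
    rw [w1, w2]
    linear_combination hC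
  · rintro ⟨hx, hlin⟩
    refine ⟨hx, ?_⟩
    have hS : (0:ℝ) < 1 - ‖x‖ ^ 2 := by nlinarith [norm_nonneg x]
    set s := Real.sqrt (1 - ‖x‖ ^ 2) with hsdef
    have hs : 0 < s := Real.sqrt_pos.mpr hS
    have e1' := power_eq p hp (0 : EuclideanSpace ℝ (Fin d))
    have e2' := power_eq q hq (0 : EuclideanSpace ℝ (Fin d))
    simp only [sub_zero, inner_zero_right, norm_zero] at e1' e2'
    have hcp : ⟪x, p⟫ = ⟪p, x⟫ := real_inner_comm p x
    have hcq : ⟪x, q⟫ = ⟪q, x⟫ := real_inner_comm q x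
    unfold kleinCenter at hlin e1' e2'
    rw [inner_sub_right, real_inner_smul_right, real_inner_smul_right, ← hadef, ← hbdef,
      hcp, hcq] at hlin
    rw [← hadef] at e1'
    rw [← hbdef] at e2'
    have w1 : kleinWeight p = ‖(2 * a)⁻¹ • p‖ ^ 2 - 1 / a := by linarith
    have w2 : kleinWeight q = ‖(2 * b)⁻¹ • q‖ ^ 2 - 1 / b := by linarith
    rw [w1, w2] at hlin
    have hC : (1 - ⟪p, x⟫) / a = (1 - ⟪q, x⟫) / b := by linear_combination hlin
    have hargeq : (1 - ⟪p, x⟫) / (a * s) = (1 - ⟪q, x⟫) / (b * s) := by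
      linear_combination s⁻¹ * hC
    have hsp : Real.sqrt ((1 - ‖p‖ ^ 2) * (1 - ‖x‖ ^ 2)) = a * s := by
      rw [Real.sqrt_mul hA.le]
    have hsq2 : Real.sqrt ((1 - ‖q‖ ^ 2) * (1 - ‖x‖ ^ 2)) = b * s := by
      rw [Real.sqrt_mul hB.le]
    unfold kleinDist
    rw [hsp, hsq2, hargeq]
end
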